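/- Let H be a complex Hilbert space and let C : H → H be a bounded linear operator such that Im⟨φ, Cφ⟩ ≠ 0 for every φ ∈ H with φ ≠ 0. Suppose C has a decomposition C = C₀ + K, where C₀ is self-adjoint and coercive (there exists c > 0 with |⟨φ, C₀φ⟩| ≥ c‖φ‖² for all φ) and K is a compact operator. Then C is coercive, i.e., there exists c' > 0 such that |⟨φ, Cφ⟩| ≥ c'‖φ‖² for all φ ∈ H. -/

import Mathlib

open scoped ComplexInnerProductSpace
open ContinuousLinearMap
open Filter Metric

/-- Coercivity criterion: if `C = C₀ + K` with `C₀` self-adjoint and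
coercive and `K` compact, and `Im ⟪φ, C φ⟫ ≠ 0` for every `φ ≠ 0`, then `C` is
coercive. -/
theorem coercivity_criterion
    {H : Type*} [NormedAddCommGroup H] [InnerProductSpace ℂ H] [CompleteSpace H]
    (C C₀ K : H →L[ℂ] H)
    (hIm : ∀ φ : H, φ ≠ 0 → (⟪φ, C φ⟫).im ≠ 0)
    (hsum : C = C₀ + K)
    (hsa : IsSelfAdjoint C₀)
    (c : ℝ) (hc : 0 < c)
    (hcoer : ∀ φ : H, c * ‖φ‖ ^ 2 ≤ ‖⟪φ, C₀ φ⟫‖)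
    (hK : IsCompactOperator (⇑K)) :
    ∃ c' > 0, ∀ φ : H, c' * ‖φ‖ ^ 2 ≤ ‖⟪φ, C φ⟫‖ := by
  by_contra hcon
  push_neg at hcon
  -- build a sequence of unit vectors with ⟪f n, C f n⟫ → 0
  have key : ∀ n : ℕ, ∃ u : H, ‖u‖ = 1 ∧ ‖⟪u, C u⟫‖ < 1 / (n + 1) := by
    intro n
    obtain ⟨φ, hφ⟩ := hcon (1 / (n + 1)) (by positivity)
    have hφne : φ ≠ 0 := by
      rintro rfl
      simp at hφ
    have hn : (0:ℝ) < ‖φ‖ := norm_pos_iff.2 hφne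
    refine ⟨((‖φ‖ : ℂ))⁻¹ • φ, ?_, ?_⟩
    · rw [norm_smul]
      simp [hn.ne']
    · have h1 : ⟪((‖φ‖ : ℂ))⁻¹ • φ, C (((‖φ‖ : ℂ))⁻¹ • φ)⟫
          = ((‖φ‖ : ℂ))⁻¹ * (starRingEnd ℂ) ((‖φ‖ : ℂ))⁻¹ * ⟪φ, C φ⟫ := by
        rw [map_smul, inner_smul_left, inner_smul_right]; ring
      rw [h1]
      rw [norm_mul, norm_mul]
      simp only [map_inv₀, norm_inv, Complex.norm_conj, Complex.norm_real, Real.norm_eq_abs, abs_of_pos hn]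
      have : ‖φ‖⁻¹ * ‖φ‖⁻¹ * ‖⟪φ, C φ⟫‖ < ‖φ‖⁻¹ * ‖φ‖⁻¹ * (1 / (n+1) * ‖φ‖^2) := by
        apply mul_lt_mul_of_pos_left hφ (by positivity)
      calc ‖φ‖⁻¹ * ‖φ‖⁻¹ * ‖⟪φ, C φ⟫‖ < ‖φ‖⁻¹ * ‖φ‖⁻¹ * (1 / (n+1) * ‖φ‖^2) := this
        _ = 1 / (n+1) * ((‖φ‖⁻¹ * ‖φ‖) * (‖φ‖⁻¹ * ‖φ‖)) := by ring
        _ = 1 / (n+1) := by rw [inv_mul_cancel₀ hn.ne']; ring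
  choose f hf1 hf2 using key
  -- ⟪f n, C f n⟫ → 0
  have hCto : Tendsto (fun n => ⟪f n, C (f n)⟫) atTop (nhds 0) := by
    rw [tendsto_zero_iff_norm_tendsto_zero]
    apply squeeze_zero (fun n => norm_nonneg _) (fun n => (hf2 n).le)
    exact tendsto_one_div_add_atTop_nhds_zero_nat
  -- ultrafilter
  set F : Ultrafilter ℕ := Ultrafilter.of atTop with hFdef
  have hF : (F : Filter ℕ) ≤ atTop := Ultrafilter.of_le _
  -- weak limit via Banach-Alaoglu
  set g : ℕ → WeakDual ℂ H := fun n => WeakDual.toStrongDual.symm (InnerProductSpace.toDual ℂ H (f n)) with hgdef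
  have hball := WeakDual.isCompact_closedBall (𝕜 := ℂ) (E := H) (0 : StrongDual ℂ H) 1
  have hgmem : ∀ n, g n ∈ WeakDual.toStrongDual ⁻¹' closedBall (0 : StrongDual ℂ H) 1 := by
    intro n
    simp only [Set.mem_preimage, mem_closedBall, dist_zero_right, hgdef]
    show ‖InnerProductSpace.toDual ℂ H (f n)‖ ≤ 1
    rw [(InnerProductSpace.toDual ℂ H).norm_map, hf1 n]
  obtain ⟨ℓ, -, hℓ⟩ := hball.ultrafilter_le_nhds (F.map g)
    (le_principal_iff.2 (Filter.mem_map.2 (Filter.univ_mem' hgmem)))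
  set φ : H := (InnerProductSpace.toDual ℂ H).symm (WeakDual.toStrongDual ℓ) with hφdef
  have hweak : ∀ y : H, Tendsto (fun n => ⟪f n, y⟫) F (nhds ⟪φ, y⟫) := by
    intro y
    have h2 := (tendsto_iff_forall_eval_tendsto_topDualPairing).1 hℓ y
    have e1 : ∀ n, topDualPairing ℂ H (g n) y = ⟪f n, y⟫ := by
      intro n
      show (g n) y = _
      show InnerProductSpace.toDual ℂ H (f n) y = _
      rw [InnerProductSpace.toDual_apply_apply]
    have e2 : topDualPairing ℂ H ℓ y = ⟪φ, y⟫ := by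
      show ℓ y = _
      rw [hφdef, InnerProductSpace.toDual_symm_apply]
      rfl
    simp only [e1, e2] at h2
    exact h2
  -- compact image: K (f n) converges along F in norm
  obtain ⟨S, hS, hKS⟩ := IsCompactOperator.image_closedBall_subset_compact
    (𝕜₁ := ℂ) (f := (K : H →ₗ[ℂ] H)) hK 2
  have hmemS : ∀ n, K (f n) ∈ S := by
    intro n
    exact hKS ⟨f n, by rw [mem_closedBall, dist_zero_right, hf1 n]; norm_num, rfl⟩
  obtain ⟨ψ, -, hψ⟩ := hS.ultrafilter_le_nhds (F.map (fun n => K (f n)))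
    (le_principal_iff.2 (Filter.mem_map.2 (Filter.univ_mem' hmemS)))
  have hKf : Tendsto (fun n => K (f n)) F (nhds ψ) := hψ
  -- identify ψ = K φ
  have hψeq : ψ = K φ := by
    apply ext_inner_left ℂ
    intro y
    have t1 : Tendsto (fun n => ⟪y, K (f n)⟫) F (nhds ⟪y, ψ⟫) :=
      tendsto_const_nhds.inner hKf
    have t2 : Tendsto (fun n => ⟪y, K (f n)⟫) F (nhds ⟪y, K φ⟫) := by
      have h3 := hweak (ContinuousLinearMap.adjoint K y)
      have h4 : Tendsto (fun n => (starRingEnd ℂ) ⟪f n, ContinuousLinearMap.adjoint K y⟫) F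
          (nhds ((starRingEnd ℂ) ⟪φ, ContinuousLinearMap.adjoint K y⟫)) :=
        (Complex.continuous_conj.tendsto _).comp h3
      simp only [inner_conj_symm] at h4
      simpa only [ContinuousLinearMap.adjoint_inner_left] using h4
    exact tendsto_nhds_unique t1 t2
  rw [hψeq] at hKf
  -- ⟪f n, K f n⟫ → ⟪φ, K φ⟫
  have hA : Tendsto (fun n => ⟪f n, K (f n)⟫) F (nhds ⟪φ, K φ⟫) := by
    have hnorm : Tendsto (fun n => ‖K (f n) - K φ‖) F (nhds 0) := by
      have := (hKf.sub (tendsto_const_nhds (x := K φ))).norm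
      simpa using this
    have hd : Tendsto (fun n => ⟪f n, K (f n) - K φ⟫) F (nhds 0) := by
      rw [tendsto_zero_iff_norm_tendsto_zero]
      apply squeeze_zero (fun n => norm_nonneg _) _ hnorm
      intro n
      calc ‖⟪f n, K (f n) - K φ⟫‖ ≤ ‖f n‖ * ‖K (f n) - K φ‖ := norm_inner_le_norm _ _
        _ = ‖K (f n) - K φ‖ := by rw [hf1 n, one_mul]
    have hsum2 : Tendsto (fun n => ⟪f n, K (f n) - K φ⟫ + ⟪f n, K φ⟫) F
        (nhds (0 + ⟪φ, K φ⟫)) := hd.add (hweak (K φ))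
    rw [zero_add] at hsum2
    have : (fun n => ⟪f n, K (f n) - K φ⟫ + ⟪f n, K φ⟫) = fun n => ⟪f n, K (f n)⟫ := by
      funext n
      rw [inner_sub_right, sub_add_cancel]
    rwa [this] at hsum2
  -- ⟪f n, C₀ f n⟫ → -⟪φ, K φ⟫
  have hb : Tendsto (fun n => ⟪f n, C₀ (f n)⟫) F (nhds (0 - ⟪φ, K φ⟫)) := by
    have heq : (fun n => ⟪f n, C₀ (f n)⟫) = fun n => ⟪f n, C (f n)⟫ - ⟪f n, K (f n)⟫ := by
      funext n
      rw [hsum]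
      simp [inner_add_right]
    rw [heq]
    exact (hCto.mono_left hF).sub hA
  -- self-adjointness: imaginary parts vanish
  have hsym : ∀ x : H, (⟪x, C₀ x⟫).im = 0 := by
    intro x
    have h6 : (starRingEnd ℂ) ⟪x, C₀ x⟫ = ⟪x, C₀ x⟫ := by
      rw [inner_conj_symm]
      conv_lhs => rw [← hsa.adjoint_eq]
      rw [ContinuousLinearMap.adjoint_inner_left]
    exact Complex.conj_eq_iff_im.1 h6
  have him : (⟪φ, K φ⟫).im = 0 := by
    have t1 : Tendsto (fun n => (⟪f n, C₀ (f n)⟫).im) F (nhds ((0 - ⟪φ, K φ⟫).im)) :=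
      (Complex.continuous_im.tendsto _).comp hb
    have t2 : Tendsto (fun n => (⟪f n, C₀ (f n)⟫).im) F (nhds 0) := by
      simp only [hsym]
      exact tendsto_const_nhds
    have h7 := tendsto_nhds_unique t1 t2
    simpa using h7
  -- hence φ = 0
  have hφ0 : φ = 0 := by
    by_contra hne
    apply hIm φ hne
    rw [hsum]
    show ((C₀ + K) φ |> fun w => ⟪φ, w⟫).im = 0
    simp only [ContinuousLinearMap.add_apply, inner_add_right, Complex.add_im, hsym φ, him,
      add_zero]
  rw [hφ0] at hb
  simp only [map_zero, inner_zero_left, sub_zero] at hb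
  -- contradiction with coercivity of C₀
  have habs : Tendsto (fun n => ‖⟪f n, C₀ (f n)⟫‖) F (nhds 0) := by
    have := (continuous_norm.tendsto _).comp hb
    simpa [Function.comp_def] using this
  have hev : ∀ᶠ n in (F : Filter ℕ), ‖⟪f n, C₀ (f n)⟫‖ < c :=
    habs.eventually_lt_const hc
  obtain ⟨n, hn⟩ := hev.exists
  have h8 := hcoer (f n)
  rw [hf1 n] at h8
  simp only [one_pow, mul_one] at h8
  linarith
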